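/- For real numbers a₁, a₂ with a₂ ≠ 2a₁, let Γ(a₁,a₂) ⊆ ℝ² be the union of the segments [(0,0),(1,a₁)] and [(1,a₁),(2,a₂)], let R(Γ(a₁,a₂)) be the minimum over (a,b) ∈ ℝ² of (0 − b)² + (a₁ − a − b)² + (a₂ − 2a − b)², and let ℐ(Γ(a₁,a₂)) = 2ℓ/δ, where ℓ = √(a₁²+1) + √((a₂−a₁)²+1) and δ is the one-dimensional Hausdorff measure of the frontier of the convex hull of Γ(a₁,a₂). For the four curves Γ₁ = Γ(1,0), Γ₂ = Γ(0,3), Γ₃ = Γ(2,0), Γ₄ = Γ(0,5), one has R(Γ₁) = 2/3, R(Γ₂) = 3/2, R(Γ₃) = 8/3, R(Γ₄) = 25/6, ℐ(Γ₁) = 2√2/(1+√2), ℐ(Γ₂) = (2+2√10)/(1+√10+√13), ℐ(Γ₃) = 2√5/(1+√5), ℐ(Γ₄) = (2+2√26)/(1+√26+√29), and the strict inequalities R(Γ₁) < R(Γ₂) < R(Γ₃) < R(Γ₄) and ℐ(Γ₄) < ℐ(Γ₂) < ℐ(Γ₁) < ℐ(Γ₃) hold; hence residual variance and inconstancy are not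 comparable. -/

import Mathlib

noncomputable section
open MeasureTheory Real Set
open scoped ENNReal

/-- The point `(x, y)` of the Euclidean plane. -/
def pt (x y : ℝ) : EuclideanSpace ℝ (Fin 2) := WithLp.toLp 2 ![x, y]

/-- The two-segment curve `Γ(a₁,a₂)` joining `(0,0)` to `(1,a₁)` to `(2,a₂)`. -/
def twoSeg (a₁ a₂ : ℝ) : Set (EuclideanSpace ℝ (Fin 2)) :=
  segment ℝ (pt 0 0) (pt 1 a₁) ∪ segment ℝ (pt 1 a₁) (pt 2 a₂)

/-- The residual variance `R(Γ(a₁,a₂))` of the data points `(0,0)`, `(1,a₁)`, `(2,a₂)`: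
the minimum over `(a,b) ∈ ℝ²` of the sum of squared residuals (divided by `n − 2 = 1`). -/
def resVar (a₁ a₂ : ℝ) : ℝ :=
  sInf (Set.range fun p : ℝ × ℝ =>
    (0 - p.2) ^ 2 + (a₁ - p.1 - p.2) ^ 2 + (a₂ - 2 * p.1 - p.2) ^ 2)

/-- The inconstancy `ℐ(Γ(a₁,a₂)) = 2ℓ/δ` of the two-segment curve `Γ(a₁,a₂)`, where
`ℓ = √(a₁²+1) + √((a₂−a₁)²+1)` is its length and `δ` is the one-dimensional Hausdorff
measure of the frontier of its convex hull. -/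
def incon (a₁ a₂ : ℝ) : ℝ :=
  2 * (Real.sqrt (a₁ ^ 2 + 1) + Real.sqrt ((a₂ - a₁) ^ 2 + 1))
    / (μH[1] (frontier (convexHull ℝ (twoSeg a₁ a₂)))).toReal

/-! ### Auxiliary material -/

abbrev E2 := EuclideanSpace ℝ (Fin 2)

def lf (c₀ c₁ : ℝ) : E2 →L[ℝ] ℝ := c₀ • EuclideanSpace.proj 0 + c₁ • EuclideanSpace.proj 1

lemma lf_apply (c₀ c₁ : ℝ) (p : E2) : lf c₀ c₁ p = c₀ * p 0 + c₁ * p 1 := by simp [lf]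

lemma lf_surj {c₀ c₁ : ℝ} (h : c₁ ≠ 0) : Function.Surjective (lf c₀ c₁) := by
  intro y
  refine ⟨pt 0 (y / c₁), ?_⟩
  rw [lf_apply]; simp [pt]; field_simp

lemma interior_hs_le (f : E2 →L[ℝ] ℝ) (hf : Function.Surjective f) (c : ℝ) :
    interior {p : E2 | f p ≤ c} = {p : E2 | f p < c} := by
  have : {p : E2 | f p ≤ c} = f ⁻¹' Iic c := rfl
  rw [this, f.interior_preimage hf, interior_Iic]; rfl

lemma interior_hs_ge (f : E2 →L[ℝ] ℝ) (hf : Function.Surjective f) (c : ℝ) :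
    interior {p : E2 | c ≤ f p} = {p : E2 | c < f p} := by
  have : {p : E2 | c ≤ f p} = f ⁻¹' Ici c := rfl
  rw [this, f.interior_preimage hf, interior_Ici]; rfl

lemma pt_ext {p : E2} {u v : ℝ} (h0 : p 0 = u) (h1 : p 1 = v) : p = pt u v := by
  ext i; fin_cases i <;> simpa [pt]

lemma seg_coords {x y x' y' : ℝ} {p : E2} (h : p ∈ segment ℝ (pt x y) (pt x' y')) :
    ∃ a b : ℝ, 0 ≤ a ∧ 0 ≤ b ∧ a + b = 1 ∧ p 0 = a*x + b*x' ∧ p 1 = a*y + b*y' := by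
  obtain ⟨a, b, ha, hb, hab, rfl⟩ := h
  exact ⟨a, b, ha, hb, hab,
    by simp [pt, PiLp.add_apply, PiLp.smul_apply, smul_eq_mul],
    by simp [pt, PiLp.add_apply, PiLp.smul_apply, smul_eq_mul]⟩

section Tri
variable (a₁ a₂ : ℝ)
def fA : E2 →L[ℝ] ℝ := lf ((a₁ - a₂)/(2*a₁ - a₂)) (1/(2*a₁ - a₂))
def fB : E2 →L[ℝ] ℝ := lf (-a₂/(2*a₁ - a₂)) (2/(2*a₁ - a₂))
def fC : E2 →L[ℝ] ℝ := lf (a₁/(2*a₁ - a₂)) (-1/(2*a₁ - a₂))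
def triS : Set E2 := {p | fA a₁ a₂ p ≤ 1 ∧ 0 ≤ fB a₁ a₂ p ∧ 0 ≤ fC a₁ a₂ p}

variable {a₁ a₂}
variable (hd : 2*a₁ - a₂ ≠ 0)

lemma fA_eq (p : E2) : fA a₁ a₂ p = fB a₁ a₂ p + fC a₁ a₂ p := by
  simp only [fA, fB, fC, lf_apply]; ring

include hd in
lemma fvals :
    fA a₁ a₂ (pt 0 0) = 0 ∧ fB a₁ a₂ (pt 0 0) = 0 ∧ fC a₁ a₂ (pt 0 0) = 0 ∧
    fA a₁ a₂ (pt 1 a₁) = 1 ∧ fB a₁ a₂ (pt 1 a₁) = 1 ∧ fC a₁ a₂ (pt 1 a₁) = 0 ∧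
    fA a₁ a₂ (pt 2 a₂) = 1 ∧ fB a₁ a₂ (pt 2 a₂) = 0 ∧ fC a₁ a₂ (pt 2 a₂) = 1 := by
  simp only [fA, fB, fC, lf_apply, pt]
  refine ⟨by norm_num, by norm_num, by norm_num, ?_, ?_, ?_, ?_, ?_, ?_⟩
  all_goals simp only [Matrix.cons_val_zero, Matrix.cons_val_one, Matrix.head_cons]
  all_goals field_simp [show a₁ * 2 - a₂ ≠ 0 by contrapose! hd; linarith, show -a₂ + a₁ * 2 ≠ 0 by contrapose! hd; linarith]
  all_goals ring

include hd in
lemma hull_eq : convexHull ℝ (twoSeg a₁ a₂) = triS a₁ a₂ := by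
  obtain ⟨hA1, hB1, hC1, hA2, hB2, hC2, hA3, hB3, hC3⟩ := fvals hd
  have hconv : Convex ℝ (triS a₁ a₂) := by
    have h1 : Convex ℝ {p : E2 | fA a₁ a₂ p ≤ 1} :=
      convex_halfSpace_le ⟨map_add _, map_smul _⟩ 1
    have h2 : Convex ℝ {p : E2 | 0 ≤ fB a₁ a₂ p} :=
      convex_halfSpace_ge ⟨map_add _, map_smul _⟩ 0
    have h3 : Convex ℝ {p : E2 | 0 ≤ fC a₁ a₂ p} :=
      convex_halfSpace_ge ⟨map_add _, map_smul _⟩ 0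
    exact (h1.inter (h2.inter h3))
  have hAmem : pt 0 0 ∈ triS a₁ a₂ := by
    refine ⟨by rw [hA1]; norm_num, by rw [hB1], by rw [hC1]⟩
  have hBmem : pt 1 a₁ ∈ triS a₁ a₂ := by
    refine ⟨le_of_eq hA2, by rw [hB2]; norm_num, le_of_eq hC2.symm⟩
  have hCmem : pt 2 a₂ ∈ triS a₁ a₂ := by
    refine ⟨le_of_eq hA3, le_of_eq hB3.symm, by rw [hC3]; norm_num⟩
  apply le_antisymm
  · apply convexHull_min _ hconv
    rintro p (hp | hp)
    · exact hconv.segment_subset hAmem hBmem hp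
    · exact hconv.segment_subset hBmem hCmem hp
  · rintro p ⟨h1, h2, h3⟩
    have hfa := fA_eq (a₁ := a₁) (a₂ := a₂) p
    have hmem3 : ∀ q ∈ ({pt 0 0, pt 1 a₁, pt 2 a₂} : Set E2),
        q ∈ convexHull ℝ (twoSeg a₁ a₂) := by
      rintro q (rfl | rfl | rfl) <;> apply subset_convexHull
      · exact Or.inl (left_mem_segment ℝ _ _)
      · exact Or.inl (right_mem_segment ℝ _ _)
      · exact Or.inr (right_mem_segment ℝ _ _)
    have := (convex_convexHull ℝ (twoSeg a₁ a₂)).sum_mem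
      (t := (Finset.univ : Finset (Fin 3)))
      (w := ![1 - fB a₁ a₂ p - fC a₁ a₂ p, fB a₁ a₂ p, fC a₁ a₂ p])
      (z := ![pt 0 0, pt 1 a₁, pt 2 a₂])
      (by
        intro i _
        fin_cases i <;> simp <;> linarith)
      (by simp [Fin.sum_univ_three]; ring)
      (by
        intro i _
        fin_cases i
        · exact hmem3 _ (Or.inl rfl)
        · exact hmem3 _ (Or.inr (Or.inl rfl))
        · exact hmem3 _ (Or.inr (Or.inr rfl)))
    have hp_eq : p = (1 - fB a₁ a₂ p - fC a₁ a₂ p) • pt 0 0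
        + fB a₁ a₂ p • pt 1 a₁ + fC a₁ a₂ p • pt 2 a₂ := by
      ext i
      fin_cases i <;>
      · simp only [PiLp.add_apply, PiLp.smul_apply, smul_eq_mul, fB, fC, lf_apply, pt]
        simp
        field_simp
        ring
    rw [Fin.sum_univ_three] at this
    simpa [← hp_eq] using this

include hd in
lemma triS_interior :
    interior (triS a₁ a₂) = {p | fA a₁ a₂ p < 1 ∧ 0 < fB a₁ a₂ p ∧ 0 < fC a₁ a₂ p} := by
  have hsA : Function.Surjective (fA a₁ a₂) := lf_surj (by simpa using one_div_ne_zero hd)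
  have hsB : Function.Surjective (fB a₁ a₂) := lf_surj (div_ne_zero two_ne_zero hd)
  have hsC : Function.Surjective (fC a₁ a₂) :=
    lf_surj (div_ne_zero (neg_ne_zero.mpr one_ne_zero) hd)
  have : triS a₁ a₂ = {p : E2 | fA a₁ a₂ p ≤ 1} ∩
      ({p : E2 | 0 ≤ fB a₁ a₂ p} ∩ {p : E2 | 0 ≤ fC a₁ a₂ p}) := rfl
  rw [this, interior_inter, interior_inter, interior_hs_le _ hsA, interior_hs_ge _ hsB,
    interior_hs_ge _ hsC]
  rfl

lemma triS_closed : IsClosed (triS a₁ a₂) := by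
  have : triS a₁ a₂ = (fA a₁ a₂) ⁻¹' Iic 1 ∩
      ((fB a₁ a₂) ⁻¹' Ici 0 ∩ (fC a₁ a₂) ⁻¹' Ici 0) := rfl
  rw [this]
  exact ((isClosed_Iic.preimage (fA a₁ a₂).continuous).inter
    ((isClosed_Ici.preimage (fB a₁ a₂).continuous).inter
      (isClosed_Ici.preimage (fC a₁ a₂).continuous)))

include hd in
lemma triS_frontier :
    frontier (triS a₁ a₂) =
      (segment ℝ (pt 0 0) (pt 1 a₁) ∪ segment ℝ (pt 0 0) (pt 2 a₂)) ∪
        segment ℝ (pt 1 a₁) (pt 2 a₂) := by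
  obtain ⟨hA1, hB1, hC1, hA2, hB2, hC2, hA3, hB3, hC3⟩ := fvals hd
  rw [frontier, (triS_closed (a₁ := a₁) (a₂ := a₂)).closure_eq, triS_interior hd]
  ext p
  constructor
  · rintro ⟨⟨h1, h2, h3⟩, hn⟩
    simp only [mem_setOf_eq, not_and_or, not_lt] at hn
    have hfa := fA_eq (a₁ := a₁) (a₂ := a₂) p
    have key : fA a₁ a₂ p = 1 ∨ fB a₁ a₂ p = 0 ∨ fC a₁ a₂ p = 0 := by
      rcases hn with h | h | h
      · exact Or.inl (le_antisymm h1 h)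
      · exact Or.inr (Or.inl (le_antisymm h h2))
      · exact Or.inr (Or.inr (le_antisymm h h3))
    have hB' : fB a₁ a₂ p = (-a₂/(2*a₁-a₂)) * p 0 + (2/(2*a₁-a₂)) * p 1 := lf_apply _ _ _
    have hC' : fC a₁ a₂ p = (a₁/(2*a₁-a₂)) * p 0 + (-1/(2*a₁-a₂)) * p 1 := lf_apply _ _ _
    rcases key with hk | hk | hk
    · refine Or.inr ⟨fB a₁ a₂ p, fC a₁ a₂ p, h2, h3, by rw [← hfa]; exact hk, ?_⟩
      ext i
      fin_cases i <;>
      · simp only [PiLp.add_apply, PiLp.smul_apply, smul_eq_mul, pt]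
        simp
        rw [hB', hC']
        field_simp
        ring
    · have h20 : 2 * p 1 = a₂ * p 0 := by
        have h : (2 * p 1 - a₂ * p 0) / (2*a₁-a₂) = 0 := by rw [← hk, hB']; ring
        have := (div_eq_zero_iff.mp h).resolve_right hd
        linarith
      have h20' : p 1 = a₂ * p 0 / 2 := by linarith
      refine Or.inl (Or.inr ⟨1 - fC a₁ a₂ p, fC a₁ a₂ p, by linarith [hfa ▸ h1, hk], h3,
        by ring, ?_⟩)
      ext i
      fin_cases i
      · simp only [PiLp.add_apply, PiLp.smul_apply, smul_eq_mul, pt]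
        simp
        rw [hC', h20']
        field_simp [show a₁ * 2 - a₂ ≠ 0 by contrapose! hd; linarith, show -a₂ + a₁ * 2 ≠ 0 by contrapose! hd; linarith]
        ring
      · simp only [PiLp.add_apply, PiLp.smul_apply, smul_eq_mul, pt]
        simp
        rw [hC', h20']
        field_simp [show a₁ * 2 - a₂ ≠ 0 by contrapose! hd; linarith, show -a₂ + a₁ * 2 ≠ 0 by contrapose! hd; linarith]
        ring
    · have h10 : p 1 = a₁ * p 0 := by
        have h : (a₁ * p 0 - p 1) / (2*a₁-a₂) = 0 := by rw [← hk, hC']; ring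
        have := (div_eq_zero_iff.mp h).resolve_right hd
        linarith
      refine Or.inl (Or.inl ⟨1 - fB a₁ a₂ p, fB a₁ a₂ p, by linarith [hfa ▸ h1, hk], h2,
        by ring, ?_⟩)
      ext i
      fin_cases i
      · simp only [PiLp.add_apply, PiLp.smul_apply, smul_eq_mul, pt]
        simp
        rw [hB', h10]
        field_simp
        ring
      · simp only [PiLp.add_apply, PiLp.smul_apply, smul_eq_mul, pt]
        simp
        rw [hB', h10]
        field_simp
        ring
  · rintro ((⟨a, b, ha, hb, hab, rfl⟩ | ⟨a, b, ha, hb, hab, rfl⟩) | ⟨a, b, ha, hb, hab, rfl⟩) <;>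
      simp only [mem_diff, mem_setOf_eq, triS, map_add, _root_.map_smul, smul_eq_mul,
        hA1, hB1, hC1, hA2, hB2, hC2, hA3, hB3, hC3, not_and_or, not_lt]
    · exact ⟨⟨by linarith, by linarith, by linarith⟩, Or.inr (Or.inr (by linarith))⟩
    · exact ⟨⟨by linarith, by linarith, by linarith⟩, Or.inr (Or.inl (by linarith))⟩
    · exact ⟨⟨by linarith, by linarith, by linarith⟩, Or.inl (by linarith)⟩

include hd in
lemma inter1 :
    segment ℝ (pt 0 0) (pt 1 a₁) ∩ segment ℝ (pt 0 0) (pt 2 a₂) ⊆ {pt 0 0} := by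
  rintro p ⟨h1, h2⟩
  obtain ⟨a, b, ha, hb, hab, h0, h1'⟩ := seg_coords h1
  obtain ⟨a', b', ha', hb', hab', h0', h1''⟩ := seg_coords h2
  have hb0 : b' * (2*a₁ - a₂) = 0 := by linear_combination a₁ * h0 - a₁ * h0' - h1' + h1''
  have : b' = 0 := (mul_eq_zero.mp hb0).resolve_right hd
  have hbz : b = 0 := by linarith [h0, h0']
  exact pt_ext (by simp [h0, hbz]) (by simp [h1', hbz])

include hd in
lemma inter2 :
    (segment ℝ (pt 0 0) (pt 1 a₁) ∪ segment ℝ (pt 0 0) (pt 2 a₂)) ∩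
      segment ℝ (pt 1 a₁) (pt 2 a₂) ⊆ {pt 1 a₁} ∪ {pt 2 a₂} := by
  rintro p ⟨h12, h3⟩
  obtain ⟨a', b', ha', hb', hab', h0', h1''⟩ := seg_coords h3
  rcases h12 with h1 | h2
  · obtain ⟨a, b, ha, hb, hab, h0, h1'⟩ := seg_coords h1
    have hb0 : b' * (2*a₁ - a₂) = 0 := by linear_combination a₁ * h0 - a₁ * h0' + h1'' - h1'
    have hb'z : b' = 0 := (mul_eq_zero.mp hb0).resolve_right hd
    have ha'1 : a' = 1 := by linarith
    exact Or.inl (pt_ext (by simp [h0', hb'z, ha'1]) (by simp [h1'', hb'z, ha'1]))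
  · obtain ⟨a, b, ha, hb, hab, h0, h1'⟩ := seg_coords h2
    have ha0 : a' * (2*a₁ - a₂) = 0 := by
      linear_combination a₂ * h0' - a₂ * h0 + 2 * h1' - 2 * h1''
    have ha'z : a' = 0 := (mul_eq_zero.mp ha0).resolve_right hd
    have hb'1 : b' = 1 := by linarith
    exact Or.inr (pt_ext (by simp [h0', ha'z, hb'1]) (by simp [h1'', ha'z, hb'1]))

end Tri

lemma hm_singleton (x : E2) : μH[1] ({x} : Set E2) = 0 := by
  have h := MeasureTheory.hausdorffMeasure_segment (E := E2) x x
  rw [segment_same] at h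
  simpa using h

lemma seg_nullmeasurable (x y : E2) :
    NullMeasurableSet (segment ℝ x y) (μH[1]) := by
  have : IsCompact (segment ℝ x y) := by
    rw [segment_eq_image]
    exact isCompact_Icc.image (by continuity)
  exact this.isClosed.measurableSet.nullMeasurableSet

lemma dist_pt (x y x' y' : ℝ) : dist (pt x y) (pt x' y') = Real.sqrt ((x-x')^2 + (y-y')^2) := by
  rw [EuclideanSpace.dist_eq, Fin.sum_univ_two]
  simp [pt, Real.dist_eq, sq_abs]

lemma measure_three_seg (A B C : E2)
    (hAB : segment ℝ A B ∩ segment ℝ A C ⊆ {A})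
    (hB : (segment ℝ A B ∪ segment ℝ A C) ∩ segment ℝ B C ⊆ {B} ∪ {C}) :
    (μH[1] ((segment ℝ A B ∪ segment ℝ A C) ∪ segment ℝ B C)).toReal
      = dist A B + dist A C + dist B C := by
  have h1 : μH[1] ((segment ℝ A B ∪ segment ℝ A C) ∩ segment ℝ B C) = 0 :=
    measure_mono_null hB (by
      refine measure_union_null (hm_singleton B) (hm_singleton C))
  have h2 : μH[1] (segment ℝ A B ∩ segment ℝ A C) = 0 :=
    measure_mono_null hAB (hm_singleton A)
  rw [measure_union₀ (seg_nullmeasurable B C) h1,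
    measure_union₀ (seg_nullmeasurable A C) h2,
    hausdorffMeasure_segment, hausdorffMeasure_segment, hausdorffMeasure_segment]
  rw [ENNReal.toReal_add (ENNReal.add_ne_top.mpr ⟨edist_ne_top _ _, edist_ne_top _ _⟩)
      (edist_ne_top _ _),
    ENNReal.toReal_add (edist_ne_top _ _) (edist_ne_top _ _)]
  simp [dist_edist]

lemma incon_eq {a₁ a₂ : ℝ} (hd : 2*a₁ - a₂ ≠ 0) :
    incon a₁ a₂ = 2 * (Real.sqrt (a₁ ^ 2 + 1) + Real.sqrt ((a₂ - a₁) ^ 2 + 1))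
      / (Real.sqrt (a₁ ^ 2 + 1) + Real.sqrt (a₂ ^ 2 + 4) + Real.sqrt ((a₂ - a₁) ^ 2 + 1)) := by
  rw [incon, hull_eq hd, triS_frontier hd,
    measure_three_seg _ _ _ (inter1 hd) (inter2 hd)]
  have d1 : dist (pt 0 0) (pt 1 a₁) = Real.sqrt (a₁ ^ 2 + 1) := by
    rw [dist_pt]; congr 1; ring
  have d2 : dist (pt 0 0) (pt 2 a₂) = Real.sqrt (a₂ ^ 2 + 4) := by
    rw [dist_pt]; congr 1; ring
  have d3 : dist (pt 1 a₁) (pt 2 a₂) = Real.sqrt ((a₂ - a₁) ^ 2 + 1) := by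
    rw [dist_pt]; congr 1; ring
  rw [d1, d2, d3]

lemma resVar_eq (a₁ a₂ : ℝ) : resVar a₁ a₂ = (2*a₁ - a₂)^2 / 6 := by
  rw [resVar]
  apply le_antisymm
  · apply csInf_le ⟨0, by rintro _ ⟨p, rfl⟩; positivity⟩
    exact ⟨(a₂/2, (2*a₁-a₂)/6), by ring⟩
  · apply le_csInf ⟨_, Set.mem_range_self ((0:ℝ), (0:ℝ))⟩
    rintro _ ⟨p, rfl⟩
    nlinarith [sq_nonneg (p.2 - (2*a₁-a₂)/6), sq_nonneg (5*(p.1 - a₂/2) + 3*(p.2 - (2*a₁-a₂)/6)),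
      sq_nonneg (p.1 - a₂/2)]

/-- Residual variance and inconstancy are not comparable: for the four curves
`Γ₁ = Γ(1,0)`, `Γ₂ = Γ(0,3)`, `Γ₃ = Γ(2,0)`, `Γ₄ = Γ(0,5)` the residual variances are
`2/3 < 3/2 < 8/3 < 25/6` while the inconstancies satisfy `ℐ(Γ₄) < ℐ(Γ₂) < ℐ(Γ₁) < ℐ(Γ₃)`. -/
theorem resVar_incon_not_comparable :
    resVar 1 0 = 2 / 3 ∧ resVar 0 3 = 3 / 2 ∧ resVar 2 0 = 8 / 3 ∧ resVar 0 5 = 25 / 6 ∧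
    incon 1 0 = 2 * Real.sqrt 2 / (1 + Real.sqrt 2) ∧
    incon 0 3 = (2 + 2 * Real.sqrt 10) / (1 + Real.sqrt 10 + Real.sqrt 13) ∧
    incon 2 0 = 2 * Real.sqrt 5 / (1 + Real.sqrt 5) ∧
    incon 0 5 = (2 + 2 * Real.sqrt 26) / (1 + Real.sqrt 26 + Real.sqrt 29) ∧
    (resVar 1 0 < resVar 0 3 ∧ resVar 0 3 < resVar 2 0 ∧ resVar 2 0 < resVar 0 5) ∧
    (incon 0 5 < incon 0 3 ∧ incon 0 3 < incon 1 0 ∧ incon 1 0 < incon 2 0) := by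
  have h4 : Real.sqrt 4 = 2 := by
    rw [show (4:ℝ) = 2^2 by norm_num, Real.sqrt_sq (by norm_num)]
  have s2p : (0:ℝ) < Real.sqrt 2 := Real.sqrt_pos.mpr (by norm_num)
  have s5p : (0:ℝ) < Real.sqrt 5 := Real.sqrt_pos.mpr (by norm_num)
  have s10p : (0:ℝ) < Real.sqrt 10 := Real.sqrt_pos.mpr (by norm_num)
  have s13p : (0:ℝ) < Real.sqrt 13 := Real.sqrt_pos.mpr (by norm_num)
  have s26p : (0:ℝ) < Real.sqrt 26 := Real.sqrt_pos.mpr (by norm_num)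
  have s29p : (0:ℝ) < Real.sqrt 29 := Real.sqrt_pos.mpr (by norm_num)
  have i1 : incon 1 0 = 2 * Real.sqrt 2 / (1 + Real.sqrt 2) := by
    rw [incon_eq (a₁ := 1) (a₂ := 0) (by norm_num)]
    norm_num [h4]
    rw [div_eq_div_iff (by positivity) (by positivity)]
    ring
  have i2 : incon 0 3 = (2 + 2 * Real.sqrt 10) / (1 + Real.sqrt 10 + Real.sqrt 13) := by
    rw [incon_eq (a₁ := 0) (a₂ := 3) (by norm_num)]
    norm_num [Real.sqrt_one]
    rw [div_eq_div_iff (by positivity) (by positivity)]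
    ring
  have i3 : incon 2 0 = 2 * Real.sqrt 5 / (1 + Real.sqrt 5) := by
    rw [incon_eq (a₁ := 2) (a₂ := 0) (by norm_num)]
    norm_num [h4]
    rw [div_eq_div_iff (by positivity) (by positivity)]
    ring
  have i4 : incon 0 5 = (2 + 2 * Real.sqrt 26) / (1 + Real.sqrt 26 + Real.sqrt 29) := by
    rw [incon_eq (a₁ := 0) (a₂ := 5) (by norm_num)]
    norm_num [Real.sqrt_one]
    rw [div_eq_div_iff (by positivity) (by positivity)]
    ring
  have s2l : (1.414213:ℝ) < Real.sqrt 2 := (Real.lt_sqrt (by norm_num)).mpr (by norm_num)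
  have s2u : Real.sqrt 2 < 1.414214 := (Real.sqrt_lt' (by norm_num)).mpr (by norm_num)
  have s5l : (2.236067:ℝ) < Real.sqrt 5 := (Real.lt_sqrt (by norm_num)).mpr (by norm_num)
  have s5u : Real.sqrt 5 < 2.236068 := (Real.sqrt_lt' (by norm_num)).mpr (by norm_num)
  have s10l : (3.162277:ℝ) < Real.sqrt 10 := (Real.lt_sqrt (by norm_num)).mpr (by norm_num)
  have s10u : Real.sqrt 10 < 3.162278 := (Real.sqrt_lt' (by norm_num)).mpr (by norm_num)
  have s13l : (3.605551:ℝ) < Real.sqrt 13 := (Real.lt_sqrt (by norm_num)).mpr (by norm_num)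
  have s13u : Real.sqrt 13 < 3.605552 := (Real.sqrt_lt' (by norm_num)).mpr (by norm_num)
  have s26l : (5.099019:ℝ) < Real.sqrt 26 := (Real.lt_sqrt (by norm_num)).mpr (by norm_num)
  have s26u : Real.sqrt 26 < 5.099020 := (Real.sqrt_lt' (by norm_num)).mpr (by norm_num)
  have s29l : (5.385164:ℝ) < Real.sqrt 29 := (Real.lt_sqrt (by norm_num)).mpr (by norm_num)
  have s29u : Real.sqrt 29 < 5.385165 := (Real.sqrt_lt' (by norm_num)).mpr (by norm_num)
  refine ⟨by rw [resVar_eq]; norm_num, by rw [resVar_eq]; norm_num,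
    by rw [resVar_eq]; norm_num, by rw [resVar_eq]; norm_num, i1, i2, i3, i4,
    ⟨by rw [resVar_eq, resVar_eq]; norm_num, by rw [resVar_eq, resVar_eq]; norm_num,
      by rw [resVar_eq, resVar_eq]; norm_num⟩, ?_, ?_, ?_⟩
  · rw [i4, i2, div_lt_div_iff₀ (by positivity) (by positivity)]
    nlinarith [mul_pos s26p s10p, mul_pos s26p s13p, mul_pos s10p s29p]
  · rw [i2, i1, div_lt_div_iff₀ (by positivity) (by positivity)]
    nlinarith [mul_pos s10p s2p, mul_pos s2p s13p]
  · rw [i1, i3, div_lt_div_iff₀ (by positivity) (by positivity)]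
    nlinarith [mul_pos s2p s5p, mul_pos s2p s10p]
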